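/- Let q ≥ 1, p = q + 1, n = p + q, F a field of characteristic zero, J_{p,q} = diag(J_p, −J_q) with J_r the r×r antidiagonal identity. Let 𝔤 = 𝔬(J_{p,q}) and 𝔤(−1) its −1 eigenspace under conjugation by I_{p,q} = diag(1_p, −1_q). Let e ∈ 𝔤(−1) be the block matrix with upper-right block (1_q over 0_{1,q}) and lower-left block (0_{q,1}|1_q). Then dim_F {X ∈ 𝔤(−1) : [e,X] = 0} = q. -/

import Mathlib

open Matrix

namespace Statement8
variable (F : Type*) [Field F] (q : ℕ)

def JJp : Matrix (Fin (q+1)) (Fin (q+1)) F := fun i j => if (i:ℕ)+(j:ℕ)+1 = q+1 then 1 else 0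
def JJq : Matrix (Fin q) (Fin q) F := fun i j => if (i:ℕ)+(j:ℕ)+1 = q then 1 else 0
def AA : Matrix (Fin (q+1)) (Fin q) F := fun i j => if (i:ℕ) = (j:ℕ) then 1 else 0
def BB : Matrix (Fin q) (Fin (q+1)) F := fun i j => if (j:ℕ) = (i:ℕ)+1 then 1 else 0
def EE : Matrix (Fin (q+1) ⊕ Fin q) (Fin (q+1) ⊕ Fin q) F := fromBlocks 0 (AA F q) (BB F q) 0
def JJ : Matrix (Fin (q+1) ⊕ Fin q) (Fin (q+1) ⊕ Fin q) F :=
  fromBlocks (JJp F q) 0 0 (-(JJq F q))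
def II : Matrix (Fin (q+1) ⊕ Fin q) (Fin (q+1) ⊕ Fin q) F := fromBlocks 1 0 0 (-1)

lemma L_BA : (BB F q)ᵀ * JJq F q = JJp F q * AA F q := by
  ext i j
  have hj : (j:ℕ) < q := j.2
  rw [mul_apply, mul_apply]
  simp only [JJp, JJq, AA, BB, transpose_apply]
  rw [Finset.sum_eq_single_of_mem (⟨q-1-(j:ℕ), by omega⟩ : Fin q) (Finset.mem_univ _)
      (fun k _ hk => by
        have hn : ¬((k:ℕ)+(j:ℕ)+1 = q) := fun h => hk (by
          rw [Fin.ext_iff]; show (k:ℕ) = q-1-(j:ℕ); omega)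
        rw [if_neg hn, mul_zero]),
    Finset.sum_eq_single_of_mem (⟨(j:ℕ), by omega⟩ : Fin (q+1)) (Finset.mem_univ _)
      (fun k _ hk => by
        have hn : ¬((k:ℕ) = (j:ℕ)) := fun h => hk (by
          rw [Fin.ext_iff]; show (k:ℕ) = (j:ℕ); omega)
        rw [if_neg hn, mul_zero])]
  show (if (i:ℕ) = q-1-(j:ℕ)+1 then (1:F) else 0) * (if q-1-(j:ℕ)+(j:ℕ)+1 = q then 1 else 0)
      = (if (i:ℕ)+(j:ℕ)+1 = q+1 then 1 else 0) * (if (j:ℕ) = (j:ℕ) then 1 else 0)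
  rw [if_pos rfl, mul_one, if_pos (show q-1-(j:ℕ)+(j:ℕ)+1 = q by omega), mul_one]
  by_cases h : (i:ℕ) + (j:ℕ) = q
  · rw [if_pos (by omega), if_pos (by omega)]
  · rw [if_neg (by omega), if_neg (by omega)]

lemma L_AB : (AA F q)ᵀ * JJp F q = JJq F q * BB F q := by
  ext i j
  have hi : (i:ℕ) < q := i.2
  rw [mul_apply, mul_apply]
  simp only [JJp, JJq, AA, BB, transpose_apply]
  rw [Finset.sum_eq_single_of_mem (⟨(i:ℕ), by omega⟩ : Fin (q+1)) (Finset.mem_univ _)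
      (fun k _ hk => by
        have hn : ¬((k:ℕ) = (i:ℕ)) := fun h => hk (by
          rw [Fin.ext_iff]; show (k:ℕ) = (i:ℕ); omega)
        rw [if_neg hn, zero_mul]),
    Finset.sum_eq_single_of_mem (⟨q-1-(i:ℕ), by omega⟩ : Fin q) (Finset.mem_univ _)
      (fun k _ hk => by
        have hn : ¬((i:ℕ)+(k:ℕ)+1 = q) := fun h => hk (by
          rw [Fin.ext_iff]; show (k:ℕ) = q-1-(i:ℕ); omega)
        rw [if_neg hn, zero_mul])]
  show (if (i:ℕ) = (i:ℕ) then (1:F) else 0) * (if (i:ℕ)+(j:ℕ)+1 = q+1 then 1 else 0)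
      = (if (i:ℕ)+(q-1-(i:ℕ))+1 = q then 1 else 0) * (if (j:ℕ) = q-1-(i:ℕ)+1 then 1 else 0)
  rw [if_pos rfl, one_mul, if_pos (show (i:ℕ)+(q-1-(i:ℕ))+1 = q by omega), one_mul]
  by_cases h : (i:ℕ) + (j:ℕ) = q
  · rw [if_pos (by omega), if_pos (by omega)]
  · rw [if_neg (by omega), if_neg (by omega)]

lemma C1 : (EE F q)ᵀ * JJ F q = -(JJ F q * EE F q) := by
  simp only [EE, JJ, fromBlocks_transpose, fromBlocks_multiply, fromBlocks_neg]
  rw [transpose_zero, transpose_zero]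
  simp [Matrix.mul_neg, L_BA, L_AB]

lemma C2 : II F q * EE F q = -(EE F q * II F q) := by
  simp only [EE, II, fromBlocks_multiply, fromBlocks_neg]
  simp

lemma C3 : II F q * II F q = 1 := by
  simp only [II, fromBlocks_multiply]
  simp [← fromBlocks_one]

lemma C0 : II F q = diagonal (Sum.elim (fun _ => (1:F)) (fun _ => -1)) := by
  ext a b
  rcases a with i | i <;> rcases b with j | j <;>
    simp [II, diagonal_apply, one_apply] <;> split <;> simp_all

lemma N1 : ∀ m : ℕ, ((EE F q)^m)ᵀ * JJ F q = ((-1:F)^m) • (JJ F q * (EE F q)^m) := by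
  intro m
  induction m with
  | zero => simp
  | succ m ih =>
    rw [pow_succ, transpose_mul, mul_assoc, ih, mul_smul_comm, ← mul_assoc, C1, pow_succ]
    rw [neg_mul, mul_assoc, smul_neg, ← neg_smul, ← pow_succ', ← pow_succ]
    congr 1
    ring

lemma N2 : ∀ m : ℕ, II F q * (EE F q)^m = ((-1:F)^m) • ((EE F q)^m * II F q) := by
  intro m
  induction m with
  | zero => simp
  | succ m ih =>
    rw [pow_succ, ← mul_assoc, ih, smul_mul_assoc, mul_assoc, C2, pow_succ]
    rw [mul_neg, ← mul_assoc, smul_neg, ← neg_smul]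
    congr 1
    ring

lemma M1 (k : ℕ) : ((EE F q)^(2*k+1))ᵀ * JJ F q = -(JJ F q * (EE F q)^(2*k+1)) := by
  rw [N1, Odd.neg_one_pow ⟨k, by ring⟩, neg_smul, one_smul]

lemma M2 (k : ℕ) : II F q * ((EE F q)^(2*k+1) * II F q) = -((EE F q)^(2*k+1)) := by
  rw [← mul_assoc, N2, Odd.neg_one_pow ⟨k, by ring⟩, neg_smul, one_smul, neg_mul,
    mul_assoc, C3, mul_one]

def uu (i : Fin (q+1)) : (Fin (q+1) ⊕ Fin q) → F := Pi.single (Sum.inl i) 1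
def vv (j : Fin q) : (Fin (q+1) ⊕ Fin q) → F := Pi.single (Sum.inr j) 1

lemma L1 (j : Fin q) : EE F q *ᵥ uu F q j.succ = vv F q j := by
  rw [uu, vv, mulVec_single_one, col_apply']
  funext a
  cases a with
  | inl i =>
    simp only [EE, fromBlocks_apply₁₁, Matrix.zero_apply, zero_mul, Pi.single_apply]
    rw [if_neg (by simp)]
  | inr i =>
    simp only [EE, fromBlocks_apply₂₁, BB, Pi.single_apply, mul_one]
    by_cases h : i = j
    · rw [if_pos (by simp [h]), if_pos (by simp [h])]
    · rw [if_neg (by simp [Fin.ext_iff] at *; omega), if_neg (by simp [h])]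

lemma L2 (j : Fin q) : EE F q *ᵥ vv F q j = uu F q j.castSucc := by
  rw [uu, vv, mulVec_single_one, col_apply']
  funext a
  cases a with
  | inl i =>
    simp only [EE, fromBlocks_apply₁₂, AA, Pi.single_apply, mul_one]
    by_cases h : i = j.castSucc
    · rw [if_pos (by rw [h, Fin.coe_castSucc]), if_pos (by simp [h])]
    · rw [if_neg (by simp [Fin.ext_iff] at *; omega), if_neg (by simp [h])]
  | inr i =>
    simp only [EE, fromBlocks_apply₂₂, Matrix.zero_apply, zero_mul, Pi.single_apply]
    rw [if_neg (by simp)]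

lemma chain (X : Matrix (Fin (q+1) ⊕ Fin q) (Fin (q+1) ⊕ Fin q) F)
    (hc : X * EE F q = EE F q * X) (h0 : X *ᵥ uu F q (Fin.last q) = 0) : X = 0 := by
  have hu : ∀ i : Fin (q+1), X *ᵥ uu F q i = 0 := by
    intro i
    induction i using Fin.reverseInduction with
    | last => exact h0
    | cast i ih =>
      have key : uu F q i.castSucc = EE F q *ᵥ (EE F q *ᵥ uu F q i.succ) := by
        rw [L1, L2]
      rw [key, mulVec_mulVec, mulVec_mulVec, hc, mul_assoc, hc, ← mul_assoc,
        ← mulVec_mulVec, ih, mulVec_zero]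
  have hv : ∀ j : Fin q, X *ᵥ vv F q j = 0 := by
    intro j
    rw [← L1, mulVec_mulVec, hc, ← mulVec_mulVec, hu, mulVec_zero]
  ext a b
  cases b with
  | inl i => have := congrFun (hu i) a; simpa [uu, mulVec_single] using this
  | inr j => have := congrFun (hv j) a; simpa [vv, mulVec_single] using this

lemma Pw : ∀ m : ℕ, (hm : m < q) →
    (EE F q)^(2*m+1) *ᵥ uu F q (Fin.last q) = vv F q ⟨q-1-m, by omega⟩ := by
  intro m
  induction m with
  | zero =>
    intro hm
    rw [pow_one, show Fin.last q = (⟨q-1, by omega⟩ : Fin q).succ from Fin.ext (by simp; omega)]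
    exact L1 F q _
  | succ m ih =>
    intro hm
    have hexp : 2*(m+1)+1 = (2*m+1)+1+1 := by ring
    rw [hexp, pow_succ', pow_succ', ← mulVec_mulVec, ← mulVec_mulVec, ih (by omega), L2]
    rw [show (⟨q-1-m, by omega⟩ : Fin q).castSucc
        = (⟨q-1-(m+1), by omega⟩ : Fin q).succ from Fin.ext (by simp; omega)]
    exact L1 F q _

def psi0 : Matrix (Fin (q+1) ⊕ Fin q) (Fin (q+1) ⊕ Fin q) F →ₗ[F] (Fin q → F) where
  toFun X := fun j => (X *ᵥ uu F q (Fin.last q)) (Sum.inr j)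
  map_add' X Y := by funext j; simp [add_mulVec]
  map_smul' c X := by funext j; simp [smul_mulVec]

def phi0 : (Fin q → F) →ₗ[F] Matrix (Fin (q+1) ⊕ Fin q) (Fin (q+1) ⊕ Fin q) F where
  toFun c := ∑ j : Fin q, c j • (EE F q)^(2*(j:ℕ)+1)
  map_add' c d := by simp [add_smul, Finset.sum_add_distrib]
  map_smul' a c := by simp [smul_smul, Finset.smul_sum]

lemma psi0_phi0 (c : Fin q → F) (j : Fin q) :
    psi0 F q (phi0 F q c) j = c ⟨q-1-(j:ℕ), by have := j.2; omega⟩ := by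
  have hj : (j:ℕ) < q := j.2
  simp only [psi0, phi0, LinearMap.coe_mk, AddHom.coe_mk]
  rw [show (∑ i : Fin q, c i • (EE F q)^(2*(i:ℕ)+1)) *ᵥ uu F q (Fin.last q)
      = ∑ i : Fin q, (c i • (EE F q)^(2*(i:ℕ)+1)) *ᵥ uu F q (Fin.last q) from
    map_sum (AddMonoidHom.mk' (fun M => M *ᵥ uu F q (Fin.last q))
      (fun M N => add_mulVec M N _)) _ _]
  rw [Finset.sum_apply]
  rw [Finset.sum_eq_single_of_mem (⟨q-1-(j:ℕ), by omega⟩ : Fin q) (Finset.mem_univ _)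
      (fun k _ hk => by
        rw [smul_mulVec, Pw F q (k:ℕ) k.2]
        simp only [Pi.smul_apply, vv, Pi.single_apply]
        rw [if_neg (by
          intro h
          apply hk
          have : q-1-(k:ℕ) = (j:ℕ) := by
            have := Sum.inr.inj h
            have := congrArg Fin.val this
            simpa using this.symm
          rw [Fin.ext_iff]; show (k:ℕ) = q-1-(j:ℕ); have := k.2; omega), smul_zero])]
  rw [smul_mulVec, Pw F q (q-1-(j:ℕ)) (by omega)]
  simp only [Pi.smul_apply, vv, Pi.single_apply]
  rw [if_pos (by congr 1; rw [Fin.ext_iff]; show (j:ℕ) = q-1-(q-1-(j:ℕ)); omega)]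
  simp

lemma phi0_apply (c : Fin q → F) :
    phi0 F q c = ∑ j : Fin q, c j • (EE F q)^(2*(j:ℕ)+1) := rfl

set_option maxHeartbeats 400000 in
theorem main [CharZero F] (hq : 0 < q) :
    Module.finrank F
      ↥(LinearMap.ker ((LinearMap.mulRight F (JJ F q)).comp
            (Matrix.transposeLinearEquiv (Fin (q+1) ⊕ Fin q) (Fin (q+1) ⊕ Fin q) F F).toLinearMap
          + LinearMap.mulLeft F (JJ F q))
        ⊓ Module.End.eigenspace
            ((LinearMap.mulLeft F (II F q)).comp (LinearMap.mulRight F (II F q))) (-1)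
        ⊓ LinearMap.ker (LinearMap.mulLeft F (EE F q) - LinearMap.mulRight F (EE F q))) = q := by
  set S := LinearMap.ker ((LinearMap.mulRight F (JJ F q)).comp
            (Matrix.transposeLinearEquiv (Fin (q+1) ⊕ Fin q) (Fin (q+1) ⊕ Fin q) F F).toLinearMap
          + LinearMap.mulLeft F (JJ F q))
        ⊓ Module.End.eigenspace
            ((LinearMap.mulLeft F (II F q)).comp (LinearMap.mulRight F (II F q))) (-1)
        ⊓ LinearMap.ker (LinearMap.mulLeft F (EE F q) - LinearMap.mulRight F (EE F q)) with hS
  have hmem : ∀ X : Matrix (Fin (q+1) ⊕ Fin q) (Fin (q+1) ⊕ Fin q) F,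
      X ∈ S ↔ (Xᵀ * JJ F q + JJ F q * X = 0 ∧
        II F q * (X * II F q) = (-1 : F) • X ∧
        EE F q * X - X * EE F q = 0) := by
    intro X
    rw [hS, Submodule.mem_inf, Submodule.mem_inf, LinearMap.mem_ker, LinearMap.mem_ker,
      Module.End.mem_eigenspace_iff, and_assoc]
    simp only [LinearMap.add_apply, LinearMap.comp_apply, LinearMap.mulRight_apply,
      LinearMap.mulLeft_apply, LinearMap.sub_apply, LinearEquiv.coe_coe,
      Matrix.transposeLinearEquiv_apply]
    exact Iff.rfl
  -- upper bound
  have hψ : ∀ X ∈ S, psi0 F q X = 0 → X = 0 := by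
    intro X hX h0
    obtain ⟨h1, h2, h3⟩ := (hmem X).1 hX
    refine chain F q X ((sub_eq_zero.mp h3).symm) ?_
    have hblock : ∀ a b : Fin (q+1), X (Sum.inl a) (Sum.inl b) = 0 := by
      intro a b
      have hD := congrFun (congrFun h2 (Sum.inl a)) (Sum.inl b)
      rw [C0, diagonal_mul, mul_diagonal] at hD
      simp only [Sum.elim_inl, one_mul, mul_one, Matrix.smul_apply, smul_eq_mul,
        neg_one_mul] at hD
      have h2' : (2 : F) * X (Sum.inl a) (Sum.inl b) = 0 := by
        rw [two_mul]
        exact eq_neg_iff_add_eq_zero.mp hD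
      exact (mul_eq_zero.mp h2').resolve_left two_ne_zero
    funext a
    cases a with
    | inl i =>
      rw [uu, mulVec_single]
      simpa using hblock i (Fin.last q)
    | inr j =>
      have := congrFun h0 j
      simpa [psi0] using this
  have hψinj : Function.Injective ((psi0 F q).comp S.subtype) := by
    rw [← LinearMap.ker_eq_bot, LinearMap.ker_eq_bot']
    intro x hx
    exact Subtype.ext (hψ x.1 x.2 hx)
  have hub : Module.finrank F S ≤ q := by
    have := LinearMap.finrank_le_finrank_of_injective hψinj
    simpa using this
  -- surjectivity
  have hpow : ∀ k : ℕ, (EE F q)^(2*k+1) ∈ S := by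
    intro k
    refine (hmem _).2 ⟨?_, ?_, ?_⟩
    · rw [M1]; exact neg_add_cancel _
    · rw [M2, neg_one_smul]
    · rw [← pow_succ', ← pow_succ, sub_self]
  have hφmem : ∀ c : Fin q → F, phi0 F q c ∈ S := by
    intro c
    rw [phi0_apply]
    exact Submodule.sum_mem S fun j _ => Submodule.smul_mem S _ (hpow _)
  have hψsurj : Function.Surjective ((psi0 F q).comp S.subtype) := by
    intro d
    refine ⟨⟨phi0 F q (fun k => d ⟨q-1-(k:ℕ), by have := k.2; omega⟩), hφmem _⟩, ?_⟩
    funext j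
    have hj : (j:ℕ) < q := j.2
    show psi0 F q (phi0 F q _) j = d j
    rw [psi0_phi0]
    congr 1
    rw [Fin.ext_iff]
    show q-1-(q-1-(j:ℕ)) = (j:ℕ)
    omega
  have heq := LinearEquiv.finrank_eq
    (LinearEquiv.ofBijective ((psi0 F q).comp S.subtype) ⟨hψinj, hψsurj⟩)
  rw [heq, Module.finrank_pi, Fintype.card_fin]

end Statement8


open Matrix

/-- for p = q + 1, the centralizer of e in the (−1)-eigenspace of
conjugation by I_{p,q} on 𝔬(J_{p,q}) has dimension q. -/
theorem orthogonal_centralizer_dimension_case_p_eq_q_add_one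
    (F : Type*) [Field F] [CharZero F] (p q : ℕ) (hq : 0 < q) (hpq : p = q + 1) :
    let n := Fin p ⊕ Fin q
    let Jp : Matrix (Fin p) (Fin p) F := fun i j => if (i : ℕ) + (j : ℕ) + 1 = p then 1 else 0
    let Jq : Matrix (Fin q) (Fin q) F := fun i j => if (i : ℕ) + (j : ℕ) + 1 = q then 1 else 0
    let Jpq : Matrix n n F := Matrix.fromBlocks Jp 0 0 (-Jq)
    let Ipq : Matrix n n F := Matrix.fromBlocks 1 0 0 (-1)
    let A : Matrix (Fin p) (Fin q) F := fun i j => if (i : ℕ) = (j : ℕ) then 1 else 0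
    let B : Matrix (Fin q) (Fin p) F := fun i j => if (j : ℕ) = (i : ℕ) + 1 then 1 else 0
    let e : Matrix n n F := Matrix.fromBlocks 0 A B 0
    -- X ↦ Xᵀ J_{p,q} + J_{p,q} X ; its kernel is 𝔬(J_{p,q})
    let orth : Matrix n n F →ₗ[F] Matrix n n F :=
      (LinearMap.mulRight F Jpq).comp
        (Matrix.transposeLinearEquiv n n F F).toLinearMap + LinearMap.mulLeft F Jpq
    -- conjugation by I_{p,q}
    let θ : Module.End F (Matrix n n F) :=
      (LinearMap.mulLeft F Ipq).comp (LinearMap.mulRight F Ipq)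
    -- ad_e
    let ade : Module.End F (Matrix n n F) :=
      LinearMap.mulLeft F e - LinearMap.mulRight F e
    Module.finrank F
      ↥(LinearMap.ker orth ⊓ Module.End.eigenspace θ (-1) ⊓ LinearMap.ker ade) = q := by
  subst hpq
  intro n Jp Jq Jpq Ipq A B e orth θ ade
  exact Statement8.main F q hq
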